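/- Let ρ be an exchangeable random semi-ultrametric on ℕ and define the equivalence relation ∼ as above from intervals of mesh < ε. Then almost surely the partition of ℕ induced by ∼ contains no singleton blocks. -/
import Mathlib


open MeasureTheory Filter
open scoped Topology

/-- The external branch length vector: `Υ(ρ)(i) = (1/2) inf_{j ≠ i} ρ(i,j)`. -/
noncomputable def extBranch (ρ : ℕ → ℕ → ℝ) (i : ℕ) : ℝ :=
  (1 / 2) * ⨅ j : {j : ℕ // j ≠ i}, ρ i (j : ℕ)

namespace Stmt18Aux

/-- The set of matrices whose external branch length at `a` lies in `[h n, h (n+1))`,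
expressed by coordinate conditions. -/
def Ablock (h : ℕ → ℝ) (n a : ℕ) : Set (ℕ → ℕ → ℝ) :=
  {r | (∀ b, b ≠ a → h n ≤ r a b / 2) ∧ ∃ b, b ≠ a ∧ r a b / 2 < h (n + 1)}

/-- `i` is a "level `n` singleton": its branch length is in `I_n` but no partner exists. -/
def Sing (h : ℕ → ℝ) (n i : ℕ) : Set (ℕ → ℕ → ℝ) :=
  Ablock h n i ∩
    {r | ∀ l, l ≠ i → ¬(r ∈ Ablock h n l ∧ h n ≤ r i l / 2 ∧ r i l / 2 < h (n + 1))}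

def pairSet (h : ℕ → ℝ) (n i j : ℕ) : Set (ℕ → ℕ → ℝ) :=
  {r | h n ≤ r i j / 2 ∧ r i j / 2 < h (n + 1)}

def SPi (h : ℕ → ℝ) (n i j : ℕ) : Set (ℕ → ℕ → ℝ) := Sing h n i ∩ pairSet h n i j

def SPj (h : ℕ → ℝ) (n i j : ℕ) : Set (ℕ → ℕ → ℝ) := Sing h n j ∩ pairSet h n i j

lemma measurable_eval (a b : ℕ) : Measurable fun r : ℕ → ℕ → ℝ => r a b :=
  (measurable_pi_apply b).comp (measurable_pi_apply a)

lemma measurableSet_Ablock (h : ℕ → ℝ) (n a : ℕ) : MeasurableSet (Ablock h n a) := by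
  have h1 : MeasurableSet {r : ℕ → ℕ → ℝ | ∀ b, b ≠ a → h n ≤ r a b / 2} := by
    have : {r : ℕ → ℕ → ℝ | ∀ b, b ≠ a → h n ≤ r a b / 2} =
        ⋂ b, ⋂ (_ : b ≠ a), {r : ℕ → ℕ → ℝ | h n ≤ r a b / 2} := by
      ext r; simp [Set.mem_iInter]
    rw [this]
    exact MeasurableSet.iInter fun b => MeasurableSet.iInter fun _ =>
      measurableSet_le measurable_const ((measurable_eval a b).div_const 2)
  have h2 : MeasurableSet {r : ℕ → ℕ → ℝ | ∃ b, b ≠ a ∧ r a b / 2 < h (n + 1)} := by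
    have : {r : ℕ → ℕ → ℝ | ∃ b, b ≠ a ∧ r a b / 2 < h (n + 1)} =
        ⋃ b, ⋃ (_ : b ≠ a), {r : ℕ → ℕ → ℝ | r a b / 2 < h (n + 1)} := by
      ext r; simp [Set.mem_iUnion]
    rw [this]
    exact MeasurableSet.iUnion fun b => MeasurableSet.iUnion fun _ =>
      measurableSet_lt ((measurable_eval a b).div_const 2) measurable_const
  have : Ablock h n a = {r : ℕ → ℕ → ℝ | ∀ b, b ≠ a → h n ≤ r a b / 2} ∩
      {r : ℕ → ℕ → ℝ | ∃ b, b ≠ a ∧ r a b / 2 < h (n + 1)} := rfl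
  rw [this]; exact h1.inter h2

lemma measurableSet_pairSet (h : ℕ → ℝ) (n i j : ℕ) : MeasurableSet (pairSet h n i j) := by
  have : pairSet h n i j = {r : ℕ → ℕ → ℝ | h n ≤ r i j / 2} ∩
      {r : ℕ → ℕ → ℝ | r i j / 2 < h (n + 1)} := rfl
  rw [this]
  exact (measurableSet_le measurable_const ((measurable_eval i j).div_const 2)).inter
    (measurableSet_lt ((measurable_eval i j).div_const 2) measurable_const)

lemma measurableSet_Sing (h : ℕ → ℝ) (n i : ℕ) : MeasurableSet (Sing h n i) := by
  have h2 : MeasurableSet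
      {r : ℕ → ℕ → ℝ | ∀ l, l ≠ i →
        ¬(r ∈ Ablock h n l ∧ h n ≤ r i l / 2 ∧ r i l / 2 < h (n + 1))} := by
    have : {r : ℕ → ℕ → ℝ | ∀ l, l ≠ i →
        ¬(r ∈ Ablock h n l ∧ h n ≤ r i l / 2 ∧ r i l / 2 < h (n + 1))} =
        ⋂ l, ⋂ (_ : l ≠ i), (Ablock h n l ∩ pairSet h n i l)ᶜ := by
      ext r
      simp only [Set.mem_setOf_eq, Set.mem_iInter, Set.mem_compl_iff, Set.mem_inter_iff,
        pairSet, not_and]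
    rw [this]
    exact MeasurableSet.iInter fun l => MeasurableSet.iInter fun _ =>
      ((measurableSet_Ablock h n l).inter (measurableSet_pairSet h n i l)).compl
  exact (measurableSet_Ablock h n i).inter h2

lemma measurableSet_SPi (h : ℕ → ℝ) (n i j : ℕ) : MeasurableSet (SPi h n i j) :=
  (measurableSet_Sing h n i).inter (measurableSet_pairSet h n i j)

lemma measurableSet_SPj (h : ℕ → ℝ) (n i j : ℕ) : MeasurableSet (SPj h n i j) :=
  (measurableSet_Sing h n j).inter (measurableSet_pairSet h n i j)

lemma perm_mem_Ablock (h : ℕ → ℝ) (n : ℕ) (p : Equiv.Perm ℕ) (r : ℕ → ℕ → ℝ) (a : ℕ) :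
    (fun x y => r (p x) (p y)) ∈ Ablock h n a ↔ r ∈ Ablock h n (p a) := by
  simp only [Ablock, Set.mem_setOf_eq]
  constructor
  · rintro ⟨H1, b, hb, hb2⟩
    refine ⟨fun c hc => ?_, p b, fun e => hb (p.injective e), hb2⟩
    have hne : p.symm c ≠ a := by
      intro e
      apply hc
      rw [← e, Equiv.apply_symm_apply]
    have := H1 (p.symm c) hne
    rwa [Equiv.apply_symm_apply] at this
  · rintro ⟨H1, b, hb, hb2⟩
    refine ⟨fun c hc => H1 (p c) (fun e => hc (p.injective e)), p.symm b, ?_, ?_⟩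
    · intro e
      apply hb
      rw [← e, Equiv.apply_symm_apply]
    · rw [Equiv.apply_symm_apply]; exact hb2
  
lemma perm_mem_Sing (h : ℕ → ℝ) (n : ℕ) (p : Equiv.Perm ℕ) (r : ℕ → ℕ → ℝ) (i : ℕ) :
    (fun x y => r (p x) (p y)) ∈ Sing h n i ↔ r ∈ Sing h n (p i) := by
  simp only [Sing, Set.mem_inter_iff, Set.mem_setOf_eq, perm_mem_Ablock]
  constructor
  · rintro ⟨hA, H⟩
    refine ⟨hA, fun m hm hc => ?_⟩
    have hne : p.symm m ≠ i := by
      intro e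
      apply hm
      rw [← e, Equiv.apply_symm_apply]
    apply H (p.symm m) hne
    rw [Equiv.apply_symm_apply]
    exact hc
  · rintro ⟨hA, H⟩
    exact ⟨hA, fun l hl hc => H (p l) (fun e => hl (p.injective e)) hc⟩

lemma extBranch_nonneg (r : ℕ → ℕ → ℝ) (hr : ∀ a b, 0 ≤ r a b) (a : ℕ) :
    0 ≤ extBranch r a :=
  mul_nonneg (by norm_num) (Real.iInf_nonneg fun j => hr a j)

lemma Ablock_iff (h : ℕ → ℝ) (n : ℕ) (r : ℕ → ℕ → ℝ) (hr : ∀ a b, 0 ≤ r a b) (a : ℕ) :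
    r ∈ Ablock h n a ↔ extBranch r a ∈ Set.Ico (h n) (h (n + 1)) := by
  haveI : Nonempty {j : ℕ // j ≠ a} := ⟨⟨a + 1, by omega⟩⟩
  have hbdd : BddBelow (Set.range fun j : {j : ℕ // j ≠ a} => r a j) := by
    refine ⟨0, ?_⟩
    rintro x ⟨j, rfl⟩
    exact hr a j
  have hEB : extBranch r a = 1 / 2 * ⨅ j : {j : ℕ // j ≠ a}, r a j := rfl
  simp only [Ablock, Set.mem_setOf_eq, Set.mem_Ico]
  constructor
  · rintro ⟨H1, b, hb, hb2⟩
    constructor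
    · have : 2 * h n ≤ ⨅ j : {j : ℕ // j ≠ a}, r a j := by
        apply le_ciInf
        intro j
        have := H1 j j.2
        linarith
      rw [hEB]; linarith
    · have : (⨅ j : {j : ℕ // j ≠ a}, r a j) ≤ r a b := ciInf_le hbdd ⟨b, hb⟩
      rw [hEB]; linarith
  · rintro ⟨H1, H2⟩
    constructor
    · intro b hb
      have : (⨅ j : {j : ℕ // j ≠ a}, r a j) ≤ r a b := ciInf_le hbdd ⟨b, hb⟩
      rw [hEB] at H1; linarith
    · have : (⨅ j : {j : ℕ // j ≠ a}, r a j) < 2 * h (n + 1) := by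
        rw [hEB] at H2; linarith
      obtain ⟨j, hj⟩ := exists_lt_of_ciInf_lt this
      exact ⟨j, j.2, by linarith⟩

lemma exists_interval (h : ℕ → ℝ) (h0 : h 0 = 0) (htop : Tendsto h atTop atTop)
    (x : ℝ) (hx : 0 ≤ x) : ∃ n, h n ≤ x ∧ x < h (n + 1) := by
  classical
  have hex : ∃ N, x < h N := (htop.eventually_gt_atTop x).exists
  have hN : x < h (Nat.find hex) := Nat.find_spec hex
  have hN0 : Nat.find hex ≠ 0 := by
    intro e
    rw [e, h0] at hN
    linarith
  obtain ⟨m, hm⟩ := Nat.exists_eq_succ_of_ne_zero hN0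
  refine ⟨m, ?_, by rw [← Nat.succ_eq_add_one, ← hm]; exact hN⟩
  have := Nat.find_min hex (by omega : m < Nat.find hex)
  linarith [not_lt.mp this]

lemma swap_support_finite (a b : ℕ) : ({x | Equiv.swap a b x ≠ x}).Finite := by
  apply Set.Finite.subset (Set.toFinite ({a, b} : Set ℕ))
  intro x hx
  by_contra h'
  simp only [Set.mem_insert_iff, Set.mem_singleton_iff, not_or] at h'
  exact hx (Equiv.swap_apply_of_ne_of_ne h'.1 h'.2)

/-- Main null lemma: the level-`n`-singleton event for index `i` is null. -/
lemma sing_null {Ω : Type*} [MeasurableSpace Ω] (μ : Measure Ω) [IsProbabilityMeasure μ]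
    (ρ : Ω → ℕ → ℕ → ℝ) (hmeas : Measurable ρ)
    (hsym : ∀ ω i j, ρ ω i j = ρ ω j i)
    (hultra : ∀ ω i j k, ρ ω i j ≤ max (ρ ω i k) (ρ ω k j))
    (hexch : ∀ p : Equiv.Perm ℕ, {i | p i ≠ i}.Finite →
      Measure.map (fun ω => fun i j => ρ ω (p i) (p j)) μ = Measure.map ρ μ)
    (h : ℕ → ℝ) (n i : ℕ) :
    μ (ρ ⁻¹' Sing h n i) = 0 := by
  classical
  have hmeas' : ∀ p : Equiv.Perm ℕ, Measurable (fun ω => fun a b => ρ ω (p a) (p b)) :=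
    fun p => measurable_pi_lambda _ fun a => measurable_pi_lambda _ fun b =>
      (measurable_pi_apply (p b)).comp ((measurable_pi_apply (p a)).comp hmeas)
  have key : ∀ (p : Equiv.Perm ℕ), ({x | p x ≠ x}).Finite → ∀ T : Set (ℕ → ℕ → ℝ),
      MeasurableSet T →
      μ ((fun ω => fun a b => ρ ω (p a) (p b)) ⁻¹' T) = μ (ρ ⁻¹' T) := by
    intro p hp T hT
    rw [← Measure.map_apply (hmeas' p) hT, ← Measure.map_apply hmeas hT, hexch p hp]
  -- all the "singleton at j with pair to i" events have the same measure
  have heq : ∀ j l : ℕ, j ≠ i → l ≠ i → μ (ρ ⁻¹' SPj h n i j) = μ (ρ ⁻¹' SPj h n i l) := by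
    intro j l hj hl
    by_cases hjl : j = l
    · rw [hjl]
    set p := Equiv.swap j l with hp
    have hpi : p i = i := Equiv.swap_apply_of_ne_of_ne (Ne.symm hj) (Ne.symm hl)
    have hpj : p j = l := Equiv.swap_apply_left j l
    have hpre : (fun ω => fun a b => ρ ω (p a) (p b)) ⁻¹' (SPj h n i j) =
        ρ ⁻¹' (SPj h n i l) := by
      ext ω
      simp only [Set.mem_preimage, SPj, Set.mem_inter_iff, pairSet, Set.mem_setOf_eq]
      rw [perm_mem_Sing, hpj, hpi]
    calc μ (ρ ⁻¹' SPj h n i j)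
        = μ ((fun ω => fun a b => ρ ω (p a) (p b)) ⁻¹' SPj h n i j) :=
          (key p (swap_support_finite j l) _ (measurableSet_SPj h n i j)).symm
      _ = μ (ρ ⁻¹' SPj h n i l) := by rw [hpre]
  -- the events are pairwise disjoint by the ultrametric inequality
  have hdisj : Pairwise (Function.onFun Disjoint
      fun j : {j : ℕ // j ≠ i} => ρ ⁻¹' SPj h n i j) := by
    rintro ⟨j, hj⟩ ⟨l, hl⟩ hne
    have hjl : j ≠ l := fun e => hne (Subtype.ext e)
    rw [Function.onFun, Set.disjoint_left]
    rintro ω ⟨⟨hAj, hNPj⟩, hPj⟩ ⟨⟨hAl, _⟩, hPl⟩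
    apply hNPj l (Ne.symm hjl)
    refine ⟨hAl, hAj.1 l (Ne.symm hjl), ?_⟩
    have h1 := hultra ω j l i
    have h2 : ρ ω j i = ρ ω i j := hsym ω j i
    have hm : max (ρ ω j i) (ρ ω i l) < 2 * h (n + 1) := by
      apply max_lt
      · rw [h2]; linarith [hPj.2]
      · linarith [hPl.2]
    have : ρ ω j l < 2 * h (n + 1) := lt_of_le_of_lt h1 hm
    linarith
  -- infinitely many disjoint events of equal probability ⟹ each is null
  haveI : Infinite {j : ℕ // j ≠ i} := by
    apply Infinite.of_injective (fun m : ℕ => (⟨i + m + 1, by omega⟩ : {j : ℕ // j ≠ i}))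
    intro a b e
    have := congrArg Subtype.val e
    simpa using this
  have hcount : μ (⋃ j : {j : ℕ // j ≠ i}, ρ ⁻¹' SPj h n i j) =
      ∑' j : {j : ℕ // j ≠ i}, μ (ρ ⁻¹' SPj h n i j) :=
    measure_iUnion hdisj fun j => hmeas (measurableSet_SPj h n i j)
  have hle1 : ∑' j : {j : ℕ // j ≠ i}, μ (ρ ⁻¹' SPj h n i j) ≤ 1 := by
    rw [← hcount]; exact prob_le_one
  have hzero : ∀ j : ℕ, j ≠ i → μ (ρ ⁻¹' SPj h n i j) = 0 := by
    intro j hj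
    by_contra hne0
    have hall : ∀ l : {j : ℕ // j ≠ i},
        μ (ρ ⁻¹' SPj h n i (l : ℕ)) = μ (ρ ⁻¹' SPj h n i j) :=
      fun l => heq (l : ℕ) j l.2 hj
    rw [tsum_congr hall, ENNReal.tsum_const_eq_top_of_ne_zero hne0] at hle1
    simp at hle1
  -- transport back to `SPi` by swapping `i` and `j`
  have hzero' : ∀ j : ℕ, j ≠ i → μ (ρ ⁻¹' SPi h n i j) = 0 := by
    intro j hj
    set p := Equiv.swap i j with hp
    have hpi : p i = j := Equiv.swap_apply_left i j
    have hpj : p j = i := Equiv.swap_apply_right i j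
    have hpre : (fun ω => fun a b => ρ ω (p a) (p b)) ⁻¹' (SPi h n i j) =
        ρ ⁻¹' (SPj h n i j) := by
      ext ω
      simp only [Set.mem_preimage, SPi, SPj, Set.mem_inter_iff, pairSet, Set.mem_setOf_eq]
      rw [perm_mem_Sing, hpi, hpj, hsym ω j i]
    rw [← key p (swap_support_finite i j) _ (measurableSet_SPi h n i j), hpre]
    exact hzero j hj
  -- the singleton event is covered by the pair events
  have hcover : ρ ⁻¹' Sing h n i ⊆ ⋃ j : {j : ℕ // j ≠ i}, ρ ⁻¹' SPi h n i j := by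
    intro ω hω
    obtain ⟨hA, hNP⟩ := hω
    obtain ⟨b, hb, hb2⟩ := hA.2
    exact Set.mem_iUnion.2 ⟨⟨b, hb⟩, ⟨⟨hA, hNP⟩, hA.1 b hb, hb2⟩⟩
  exact measure_mono_null hcover (measure_iUnion_null fun j => hzero' j j.2)

end Stmt18Aux

/-- For an exchangeable random semi-ultrametric `ρ` on `ℕ` and the equivalence relation
built from intervals `[h_k, h_{k+1})` of mesh `< ε` (with `P(v(i) = h_k) = 0`), almost
surely the induced partition of `ℕ` contains no singleton blocks. -/
theorem stmt18 {Ω : Type*} [MeasurableSpace Ω] (μ : Measure Ω) [IsProbabilityMeasure μ]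
    (ρ : Ω → ℕ → ℕ → ℝ) (hmeas : Measurable ρ)
    (hsemi : ∀ ω, (∀ i, ρ ω i i = 0) ∧ (∀ i j, 0 ≤ ρ ω i j) ∧ (∀ i j, ρ ω i j = ρ ω j i) ∧
      ∀ i j k, ρ ω i j ≤ max (ρ ω i k) (ρ ω k j))
    (hexch : ∀ p : Equiv.Perm ℕ, {i | p i ≠ i}.Finite →
      Measure.map (fun ω => fun i j => ρ ω (p i) (p j)) μ = Measure.map ρ μ)
    (ε : ℝ) (hε : 0 < ε)
    (h : ℕ → ℝ) (h0 : h 0 = 0) (hmono : StrictMono h)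
    (htop : Tendsto h atTop atTop)
    (h1 : h 1 < ε) (hgap : ∀ k, h (k + 1) - h k < ε)
    (hatom : ∀ i k, μ {ω | extBranch (ρ ω) i = h k} = 0) :
    ∀ᵐ ω ∂μ, ∀ i : ℕ, ∃ j : ℕ, j ≠ i ∧ ∃ k : ℕ,
      extBranch (ρ ω) i ∈ Set.Ico (h k) (h (k + 1)) ∧
      extBranch (ρ ω) j ∈ Set.Ico (h k) (h (k + 1)) ∧
      ρ ω i j / 2 ∈ Set.Ico (h k) (h (k + 1)) := by
  classical
  have hnull : μ (⋃ i, ⋃ n, ρ ⁻¹' Stmt18Aux.Sing h n i) = 0 :=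
    measure_iUnion_null fun i => measure_iUnion_null fun n =>
      Stmt18Aux.sing_null μ ρ hmeas (fun ω a b => (hsemi ω).2.2.1 a b)
        (fun ω a b c => (hsemi ω).2.2.2 a b c) hexch h n i
  rw [ae_iff]
  refine measure_mono_null ?_ hnull
  intro ω hω
  simp only [Set.mem_setOf_eq] at hω
  push_neg at hω
  obtain ⟨i, hi⟩ := hω
  have hnn : ∀ a b, 0 ≤ ρ ω a b := (hsemi ω).2.1
  obtain ⟨n, hn1, hn2⟩ := Stmt18Aux.exists_interval h h0 htop (extBranch (ρ ω) i)
    (Stmt18Aux.extBranch_nonneg (ρ ω) hnn i)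
  refine Set.mem_iUnion.2 ⟨i, Set.mem_iUnion.2 ⟨n, ?_⟩⟩
  have hA : ρ ω ∈ Stmt18Aux.Ablock h n i :=
    (Stmt18Aux.Ablock_iff h n (ρ ω) hnn i).2 ⟨hn1, hn2⟩
  refine ⟨hA, ?_⟩
  intro l hl hcon
  obtain ⟨hAl, hlo, hhi⟩ := hcon
  have hvl := (Stmt18Aux.Ablock_iff h n (ρ ω) hnn l).1 hAl
  exact hi l hl n ⟨hn1, hn2⟩ hvl ⟨hlo, hhi⟩
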